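/- Let u be uniformly distributed on the unit sphere of R^N and let s_1,...,s_N be constants in [0, B]. Let s̄ = N^{-1}∑_k s_k. Then for every t > 0, Pr{∑_{k=1}^N s_k u_k² ≤ s̄ - t} ≤ exp(-N t² / (4B(B+t))). -/

import Mathlib

set_option maxHeartbeats 1000000

open MeasureTheory
open Real ENNReal Metric Set

/-- The uniform (normalized Haar) probability measure on the unit sphere of `ℝ^N`. -/
noncomputable def sphereUniform (N : ℕ) :
    Measure (Metric.sphere (0 : EuclideanSpace ℝ (Fin N)) 1) :=
  ((volume : Measure (EuclideanSpace ℝ (Fin N))).toSphere Set.univ)⁻¹ •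
    (volume : Measure (EuclideanSpace ℝ (Fin N))).toSphere

lemma log_ineq_nonneg {y : ℝ} (hy : 0 ≤ y) : y - y^2/2 ≤ Real.log (1+y) := by
  set f : ℝ → ℝ := fun y => Real.log (1+y) - (y - y^2/2) with hf
  have hd : ∀ x : ℝ, 0 < 1 + x → HasDerivAt f (1/(1+x) - (1 - x)) x := by
    intro x hx
    have hne : (1:ℝ) + x ≠ 0 := ne_of_gt hx
    have hlog : HasDerivAt (fun y : ℝ => Real.log (1+y)) (1/(1+x)) x := by
      simpa using ((hasDerivAt_id x).const_add 1).log hne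
    have hpoly : HasDerivAt (fun y : ℝ => y - y^2/2) (1 - 2*x^1/2) x :=
      (hasDerivAt_id x).sub ((hasDerivAt_pow 2 x).div_const 2)
    have := hlog.sub hpoly
    exact this.congr_deriv (by ring)
  have mono : MonotoneOn f (Set.Ici (0:ℝ)) := by
    apply monotoneOn_of_deriv_nonneg (convex_Ici 0)
    · intro x hx
      have hx' : (0:ℝ) < 1 + x := by have : (0:ℝ) ≤ x := hx; linarith
      exact (hd x hx').continuousAt.continuousWithinAt
    · intro x hx
      rw [interior_Ici] at hx
      have hx' : (0:ℝ) < 1 + x := by have : (0:ℝ) < x := hx; linarith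
      exact (hd x hx').differentiableAt.differentiableWithinAt
    · intro x hx
      rw [interior_Ici] at hx
      have hx0 : (0:ℝ) < x := hx
      have hx' : (0:ℝ) < 1 + x := by linarith
      rw [(hd x hx').deriv]
      rw [div_sub' (ne_of_gt hx')]
      apply div_nonneg _ (le_of_lt hx')
      nlinarith
  have h0 : f 0 = 0 := by simp [hf]
  have := mono (Set.mem_Ici.mpr le_rfl) (Set.mem_Ici.mpr hy) hy
  rw [h0] at this
  simpa [hf, sub_nonneg] using this

lemma log_ineq_neg {y : ℝ} (hy1 : -1 < y) (hy0 : y ≤ 0) :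
    y - y^2/(2*(1+y)) ≤ Real.log (1+y) := by
  set f : ℝ → ℝ := fun y => Real.log (1+y) - (y - y^2/(2*(1+y))) with hf
  have hd : ∀ x : ℝ, 0 < 1 + x →
      HasDerivAt f (-(x^2/(2*(1+x)^2))) x := by
    intro x hx
    have hne : (1:ℝ) + x ≠ 0 := ne_of_gt hx
    have hne2 : 2*((1:ℝ) + x) ≠ 0 := by positivity
    have hlog : HasDerivAt (fun y : ℝ => Real.log (1+y)) (1/(1+x)) x := by
      simpa using ((hasDerivAt_id x).const_add 1).log hne
    have hden : HasDerivAt (fun y : ℝ => 2*(1+y)) 2 x := by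
      simpa using ((hasDerivAt_id x).const_add 1).const_mul 2
    have hq : HasDerivAt (fun y : ℝ => y^2/(2*(1+y)))
        ((2*x^1*(2*(1+x)) - x^2*2)/(2*(1+x))^2) x :=
      (hasDerivAt_pow 2 x).div hden hne2
    have hpoly : HasDerivAt (fun y : ℝ => y - y^2/(2*(1+y)))
        (1 - (2*x^1*(2*(1+x)) - x^2*2)/(2*(1+x))^2) x := (hasDerivAt_id x).sub hq
    have := hlog.sub hpoly
    apply this.congr_deriv
    field_simp
    ring
  have anti : AntitoneOn f (Set.Icc (-1/2 + y/2 : ℝ) 0) := by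
    apply antitoneOn_of_deriv_nonpos (convex_Icc _ _)
    · intro x hx
      have hx' : (0:ℝ) < 1 + x := by
        have := hx.1; linarith
      exact (hd x hx').continuousAt.continuousWithinAt
    · intro x hx
      rw [interior_Icc] at hx
      have hx' : (0:ℝ) < 1 + x := by have := hx.1; linarith
      exact (hd x hx').differentiableAt.differentiableWithinAt
    · intro x hx
      rw [interior_Icc] at hx
      have hx' : (0:ℝ) < 1 + x := by have := hx.1; linarith
      rw [(hd x hx').deriv]
      have : (0:ℝ) ≤ x^2/(2*(1+x)^2) := by positivity
      linarith
  have hmem : y ∈ Set.Icc (-1/2 + y/2 : ℝ) 0 := ⟨by linarith, hy0⟩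
  have hmem0 : (0:ℝ) ∈ Set.Icc (-1/2 + y/2 : ℝ) 0 := ⟨by linarith, le_rfl⟩
  have := anti hmem hmem0 hy0
  have h0 : f 0 = 0 := by simp [hf]
  rw [h0] at this
  simpa [hf, sub_nonneg] using this

lemma log_quad {D y : ℝ} (hD0 : 0 < D) (hD1 : D ≤ 1) (hy : D - 1 ≤ y) :
    y - y^2/(2*D) ≤ Real.log (1+y) := by
  rcases le_or_gt 0 y with h | h
  · refine le_trans ?_ (log_ineq_nonneg h)
    have : y^2/2 ≤ y^2/(2*D) := by
      apply div_le_div_of_nonneg_left (by positivity) (by positivity)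
      nlinarith
    linarith
  · have h1 : -1 < y := by linarith
    refine le_trans ?_ (log_ineq_neg h1 (le_of_lt h))
    have hDy : D ≤ 1 + y := by linarith
    have : y^2/(2*(1+y)) ≤ y^2/(2*D) := by
      apply div_le_div_of_nonneg_left (by positivity) (by positivity)
      linarith
    linarith

lemma gauss_lintegral (N : ℕ) (c : Fin N → ℝ) (hc : ∀ k, c k < 0) :
    ∫⁻ x : EuclideanSpace ℝ (Fin N), ENNReal.ofReal (Real.exp (∑ k, c k * (x k)^2))
      = ∏ k, ENNReal.ofReal (Real.sqrt (π / (-(c k)))) := by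
  have MP := (EuclideanSpace.volume_preserving_symm_measurableEquiv_toLp (Fin N)).symm
  rw [← MP.lintegral_comp]
  · have heq : ∀ x : Fin N → ℝ,
        ENNReal.ofReal (Real.exp (∑ k, c k *
          (((MeasurableEquiv.toLp 2 (Fin N → ℝ)).symm.symm x) k)^2))
        = ENNReal.ofReal (∏ k, Real.exp (c k * (x k)^2)) := by
      intro x
      rw [← Real.exp_sum]
      rfl
    simp_rw [heq]
    have hint : Integrable (fun x : Fin N → ℝ => ∏ k, Real.exp (c k * (x k)^2)) := by
      apply Integrable.fintype_prod (f := fun k (y : ℝ) => Real.exp (c k * y^2))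
      intro k
      have := integrable_exp_neg_mul_sq (b := -(c k)) (by linarith [hc k])
      simpa using this
    rw [← MeasureTheory.ofReal_integral_eq_lintegral_ofReal hint]
    · rw [volume_pi, integral_fintype_prod_eq_prod (f := fun k (y : ℝ) => Real.exp (c k * y^2))]
      have : ∀ k, ∫ y : ℝ, Real.exp (c k * y^2) = Real.sqrt (π / (-(c k))) := by
        intro k
        have := integral_gaussian (-(c k))
        simpa using this
      simp_rw [this]
      rw [ENNReal.ofReal_prod_of_nonneg]
      intro k _
      positivity
    · filter_upwards with x
      positivity
  · apply Measurable.ennreal_ofReal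
    apply Real.measurable_exp.comp
    apply Finset.measurable_sum
    intro k _
    apply Measurable.const_mul
    exact ((measurable_pi_apply k).comp (MeasurableEquiv.toLp 2 (Fin N → ℝ)).symm.measurable).pow_const 2

lemma sphere_sum_sq (N : ℕ) (u : Metric.sphere (0 : EuclideanSpace ℝ (Fin N)) 1) :
    ∑ k, ((u : EuclideanSpace ℝ (Fin N)) k)^2 = 1 := by
  have hn : ‖(u : EuclideanSpace ℝ (Fin N))‖ = 1 := by
    have := u.2
    rwa [mem_sphere_zero_iff_norm] at this
  rw [EuclideanSpace.norm_eq] at hn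
  have := Real.sqrt_eq_one.mp hn
  simpa [Real.norm_eq_abs, sq_abs] using this

lemma chernoff_sphere (N : ℕ) (hN : 0 < N) (d : Fin N → ℝ) (hd : ∀ k, d k < 1/2)
    (A : Set (Metric.sphere (0 : EuclideanSpace ℝ (Fin N)) 1)) (hAm : MeasurableSet A)
    (hA : ∀ u ∈ A, 0 ≤ ∑ k, d k * ((u : EuclideanSpace ℝ (Fin N)) k)^2) :
    sphereUniform N A ≤ ENNReal.ofReal (∏ k, Real.sqrt (1/(1 - 2 * d k))) := by
  set E := EuclideanSpace ℝ (Fin N)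
  haveI : Nontrivial E := by
    apply Module.nontrivial_of_finrank_pos (R := ℝ)
    rw [finrank_euclideanSpace_fin]
    exact hN
  set μ : Measure E := volume with hμ
  set T := μ.toSphere with hT
  set R := Measure.volumeIoiPow (Module.finrank ℝ E - 1) with hR
  -- measurability of coordinates
  have hcoord : ∀ k : Fin N, Measurable fun x : E => x k := fun k =>
    (measurable_pi_apply k).comp (MeasurableEquiv.toLp 2 (Fin N → ℝ)).symm.measurable
  -- the two radial-ish functions
  set G : E → ℝ≥0∞ := fun x => ENNReal.ofReal (Real.exp (∑ k, (d k - 1/2) * (x k)^2)) with hG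
  set ρ : E → ℝ≥0∞ := fun x => ENNReal.ofReal (Real.exp (∑ k, (-(1:ℝ)/2) * (x k)^2)) with hρ
  have hGm : Measurable G := by
    apply Measurable.ennreal_ofReal
    apply Real.measurable_exp.comp
    exact Finset.measurable_sum _ fun k _ => ((hcoord k).pow_const 2).const_mul _
  have hρm : Measurable ρ := by
    apply Measurable.ennreal_ofReal
    apply Real.measurable_exp.comp
    exact Finset.measurable_sum _ fun k _ => ((hcoord k).pow_const 2).const_mul _
  -- transfer lemma
  have transfer : ∀ h : E → ℝ≥0∞, Measurable h →
      ∫⁻ x, h x ∂μ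
        = ∫⁻ p : sphere (0:E) 1 × Set.Ioi (0:ℝ), h ((p.2 : ℝ) • (p.1 : E)) ∂(T.prod R) := by
    intro h hm
    have hsm : Measurable fun p : sphere (0:E) 1 × Set.Ioi (0:ℝ) => (p.2 : ℝ) • (p.1 : E) :=
      ((continuous_subtype_val.comp continuous_snd).smul
        (continuous_subtype_val.comp continuous_fst)).measurable
    have MP := μ.measurePreserving_homeomorphUnitSphereProd
    calc ∫⁻ x, h x ∂μ = ∫⁻ x in ({0}ᶜ : Set E), h x ∂μ := by
          rw [MeasureTheory.restrict_compl_singleton]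
      _ = ∫⁻ x : (({0}ᶜ : Set E)), h x ∂(μ.comap Subtype.val) :=
          (lintegral_subtype_comap (measurableSet_singleton (0:E)).compl _).symm
      _ = ∫⁻ x : (({0}ᶜ : Set E)),
            (fun p : sphere (0:E) 1 × Set.Ioi (0:ℝ) => h ((p.2 : ℝ) • (p.1 : E)))
              (homeomorphUnitSphereProd E x) ∂(μ.comap Subtype.val) := by
          congr 1
          ext x
          simp only []
          rw [← homeomorphUnitSphereProd_symm_apply_coe, Homeomorph.symm_apply_apply]
      _ = _ := MP.lintegral_comp (hm.comp hsm)
  -- the indicator-times-radial function on the product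
  set I : ℝ≥0∞ := ∫⁻ r : Set.Ioi (0:ℝ), ENNReal.ofReal (Real.exp (-(r:ℝ)^2/2)) ∂ R with hI
  have hrad : Measurable fun r : Set.Ioi (0:ℝ) => ENNReal.ofReal (Real.exp (-(r:ℝ)^2/2)) := by
    apply Measurable.ennreal_ofReal
    apply Real.measurable_exp.comp
    exact (measurable_subtype_coe.pow_const 2).neg.div_const 2
  -- sum of squares on the sphere is 1
  have husq : ∀ u : sphere (0:E) 1, ∑ k, ((u : E) k)^2 = 1 := by
    intro u
    have hn : ‖(u : E)‖ = 1 := by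
      have := u.2
      rwa [mem_sphere_zero_iff_norm] at this
    rw [EuclideanSpace.norm_eq] at hn
    have := Real.sqrt_eq_one.mp hn
    simpa [Real.norm_eq_abs, sq_abs] using this
  -- lower bound for G along polar coordinates
  have hGlow : ∀ p : sphere (0:E) 1 × Set.Ioi (0:ℝ),
      A.indicator (fun _ => (1:ℝ≥0∞)) p.1 * ENNReal.ofReal (Real.exp (-(p.2:ℝ)^2/2))
        ≤ G ((p.2 : ℝ) • (p.1 : E)) := by
    rintro ⟨u, r⟩
    by_cases hu : u ∈ A
    · rw [Set.indicator_of_mem hu, one_mul, hG]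
      apply ENNReal.ofReal_le_ofReal
      apply Real.exp_le_exp.mpr
      have hsmul : ∀ k, (((r:ℝ) • (u:E)) k) = (r:ℝ) * (u:E) k := fun k => rfl
      have hsum : ∑ k, (d k - 1/2) * (((r:ℝ) • (u:E)) k)^2
          = (r:ℝ)^2 * (∑ k, d k * ((u:E) k)^2) - (r:ℝ)^2/2 * (∑ k, ((u:E) k)^2) := by
        simp_rw [hsmul, Finset.mul_sum, ← Finset.sum_sub_distrib]
        congr 1; ext k; ring
      rw [hsum, husq u]
      have h1 := hA u hu
      nlinarith [sq_nonneg (r:ℝ)]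
    · rw [Set.indicator_of_notMem hu, zero_mul]
      exact zero_le
  -- main inequality  T A * I ≤ ∫⁻ G
  have key1 : T A * I ≤ ∫⁻ x, G x ∂μ := by
    rw [transfer G hGm]
    have := lintegral_prod_mul (μ := T) (ν := R)
      (f := A.indicator fun _ => (1:ℝ≥0∞))
      (g := fun r : Set.Ioi (0:ℝ) => ENNReal.ofReal (Real.exp (-(r:ℝ)^2/2)))
      ((measurable_one.indicator hAm).aemeasurable) hrad.aemeasurable
    rw [lintegral_indicator_const hAm, one_mul] at this
    rw [← hI] at this
    calc T A * I = ∫⁻ p : sphere (0:E) 1 × Set.Ioi (0:ℝ),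
          A.indicator (fun _ => (1:ℝ≥0∞)) p.1
            * ENNReal.ofReal (Real.exp (-(p.2:ℝ)^2/2)) ∂(T.prod R) := this.symm
      _ ≤ _ := lintegral_mono fun p => hGlow p
  -- equality  T univ * I = ∫⁻ ρ
  have key2 : T Set.univ * I = ∫⁻ x, ρ x ∂μ := by
    rw [transfer ρ hρm]
    have := lintegral_prod_mul (μ := T) (ν := R)
      (f := fun _ => (1:ℝ≥0∞))
      (g := fun r : Set.Ioi (0:ℝ) => ENNReal.ofReal (Real.exp (-(r:ℝ)^2/2)))
      aemeasurable_const hrad.aemeasurable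
    rw [lintegral_const, one_mul] at this
    rw [← hI] at this
    have hρeq : ∀ p : sphere (0:E) 1 × Set.Ioi (0:ℝ),
        ρ ((p.2 : ℝ) • (p.1 : E)) = ENNReal.ofReal (Real.exp (-(p.2:ℝ)^2/2)) := by
      rintro ⟨u, r⟩
      rw [hρ]
      simp only []
      congr 1
      have hsmul : ∀ k, (((r:ℝ) • (u:E)) k) = (r:ℝ) * (u:E) k := fun k => rfl
      have hsum : ∑ k, (-(1:ℝ)/2) * (((r:ℝ) • (u:E)) k)^2
          = -(r:ℝ)^2/2 * (∑ k, ((u:E) k)^2) := by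
        simp_rw [hsmul, Finset.mul_sum]
        congr 1; ext k; ring
      rw [hsum, husq u, mul_one]
    rw [lintegral_congr hρeq]
    simpa using this.symm
  -- values of the two Gaussian integrals
  have hG_val : ∫⁻ x, G x ∂μ = ∏ k, ENNReal.ofReal (Real.sqrt (π / (1/2 - d k))) := by
    rw [hG, hμ]
    rw [gauss_lintegral N (fun k => d k - 1/2) (fun k => by linarith [hd k])]
    congr 1; ext k; congr 2; ring
  have hρ_val : ∫⁻ x, ρ x ∂μ = ∏ _k : Fin N, ENNReal.ofReal (Real.sqrt (2 * π)) := by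
    rw [hρ, hμ]
    rw [gauss_lintegral N (fun _ => -(1:ℝ)/2) (fun k => by norm_num)]
    congr 1; ext k; congr 2
    rw [eq_comm, eq_div_iff (by norm_num : -(-(1:ℝ)/2) ≠ 0)]
    ring
  -- positivity and finiteness facts
  have hρpos : ∫⁻ x, ρ x ∂μ ≠ 0 := by
    rw [hρ_val]
    rw [Finset.prod_ne_zero_iff]
    intro k _
    exact (ENNReal.ofReal_pos.mpr (Real.sqrt_pos.mpr (by positivity))).ne'
  have hρtop : ∫⁻ x, ρ x ∂μ ≠ ⊤ := by
    rw [hρ_val]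
    exact (ENNReal.prod_lt_top fun k _ => ENNReal.ofReal_lt_top).ne
  have hTutop : T Set.univ ≠ ⊤ := measure_ne_top T Set.univ
  have hTu0 : T Set.univ ≠ 0 := by
    intro h
    rw [h, zero_mul] at key2
    exact hρpos key2.symm
  have hItop : I ≠ ⊤ := by
    intro h
    rw [h, ENNReal.mul_top hTu0] at key2
    exact hρtop key2.symm
  have hI0 : I ≠ 0 := by
    intro h
    rw [h, mul_zero] at key2
    exact hρpos key2.symm
  -- combine
  have hPnonneg : ∀ k : Fin N, (0:ℝ) ≤ Real.sqrt (1/(1 - 2 * d k)) := fun k => Real.sqrt_nonneg _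
  have hsplit : (∏ k, ENNReal.ofReal (Real.sqrt (π / (1/2 - d k))))
      = ENNReal.ofReal (∏ k, Real.sqrt (1/(1 - 2 * d k)))
        * ∏ _k : Fin N, ENNReal.ofReal (Real.sqrt (2 * π)) := by
    rw [ENNReal.ofReal_prod_of_nonneg (fun k _ => hPnonneg k), ← Finset.prod_mul_distrib]
    congr 1; ext k
    rw [← ENNReal.ofReal_mul (hPnonneg k),
      ← Real.sqrt_mul (le_of_lt (div_pos one_pos (by linarith [hd k])))]
    congr 2
    rw [div_mul_eq_mul_div, div_eq_div_iff (by have := hd k; linarith) (by have := hd k; linarith)]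
    ring
  rw [sphereUniform, Measure.smul_apply, smul_eq_mul]
  rw [ENNReal.inv_mul_le_iff hTu0 hTutop]
  rw [← ENNReal.mul_le_mul_iff_left hI0 hItop]
  calc T A * I ≤ ∫⁻ x, G x ∂μ := key1
    _ = ENNReal.ofReal (∏ k, Real.sqrt (1/(1 - 2 * d k)))
        * ∏ _k : Fin N, ENNReal.ofReal (Real.sqrt (2 * π)) := by rw [hG_val, hsplit]
    _ = ENNReal.ofReal (∏ k, Real.sqrt (1/(1 - 2 * d k))) * ∫⁻ x, ρ x ∂μ := by rw [hρ_val]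
    _ = ENNReal.ofReal (∏ k, Real.sqrt (1/(1 - 2 * d k))) * (T Set.univ * I) := by rw [key2]
    _ = T Set.univ * ENNReal.ofReal (∏ k, Real.sqrt (1/(1 - 2 * d k))) * I := by ring

/-- For `u` uniform on the unit sphere of `ℝ^N` and constants `0 ≤ s_k ≤ B`,
with `s̄ = N⁻¹ ∑ s_k`, for every `t > 0`,
`Pr{∑ s_k u_k² ≤ s̄ - t} ≤ exp (-N t² / (4 B (B + t)))`. -/
theorem sphere_quadratic_lower_deviation (N : ℕ) (hN : 0 < N) (s : Fin N → ℝ) (B t : ℝ)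
    (hs : ∀ k, 0 ≤ s k) (hsB : ∀ k, s k ≤ B) (ht : 0 < t) :
    sphereUniform N
        {u | ∑ k, s k * ((u : EuclideanSpace ℝ (Fin N)) k) ^ 2 ≤
          (1 / N : ℝ) * ∑ k, s k - t}
      ≤ ENNReal.ofReal (Real.exp (-(N * t ^ 2) / (4 * B * (B + t)))) := by
  set A := {u : Metric.sphere (0 : EuclideanSpace ℝ (Fin N)) 1 |
      ∑ k, s k * ((u : EuclideanSpace ℝ (Fin N)) k) ^ 2 ≤ (1 / N : ℝ) * ∑ k, s k - t} with hAdef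
  set m : ℝ := (1 / N : ℝ) * ∑ k, s k with hm
  rcases lt_or_ge m t with hcase | hcase
  · -- the event is empty
    have hempty : A = ∅ := by
      rw [Set.eq_empty_iff_forall_notMem]
      intro u hu
      have h1 : (0:ℝ) ≤ ∑ k, s k * ((u : EuclideanSpace ℝ (Fin N)) k) ^ 2 :=
        Finset.sum_nonneg fun k _ => mul_nonneg (hs k) (sq_nonneg _)
      have h2 := hu.out
      rw [← hm] at h2
      linarith
    rw [hempty]
    simp
  · -- main case
    have hNpos : (0:ℝ) < N := Nat.cast_pos.mpr hN
    have hS1 : ∑ k, s k = N * m := by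
      rw [hm]; field_simp
    have hmB : m ≤ B := by
      have : ∑ k, s k ≤ ∑ _k : Fin N, B := Finset.sum_le_sum fun k _ => hsB k
      rw [Finset.sum_const, Finset.card_univ, Fintype.card_fin, nsmul_eq_mul] at this
      rw [hm]
      rw [div_mul_eq_mul_div, div_le_iff₀ hNpos]
      linarith
    have hmpos : 0 < m := lt_of_lt_of_le ht hcase
    have hBpos : 0 < B := lt_of_lt_of_le hmpos hmB
    set c : ℝ := m - t with hc
    set w : ℝ := B + t - m with hw
    have hwpos : 0 < w := by rw [hw]; linarith
    have hcnn : 0 ≤ c := by rw [hc]; linarith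
    set v : ℝ := m * (B - m) + t^2 with hv
    have hvpos : 0 < v := by
      rw [hv]
      nlinarith
    set lam : ℝ := t / (2 * m * w) with hlam
    have hlampos : 0 < lam := by rw [hlam]; positivity
    have hmw : m * w - t * c = v := by rw [hw, hv, hc]; ring
    set D : ℝ := 1 - 2 * lam * c with hD
    have hDval : D = v / (m * w) := by
      rw [hD, hlam]
      field_simp
      linear_combination (2*m*w)*hmw
    have hDpos : 0 < D := by rw [hDval]; positivity
    have hD1 : D ≤ 1 := by
      rw [hD]
      nlinarith
    set d : Fin N → ℝ := fun k => lam * (c - s k) with hd_def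
    have hd : ∀ k, d k < 1/2 := by
      intro k
      have h1 : d k ≤ lam * c := by
        simp only [hd_def]
        have := hs k
        nlinarith
      have h2 : 2 * lam * c < 1 := by
        have h := hDpos
        rw [hD] at h
        linarith
      linarith
    -- the event gives nonnegativity of the tilted quadratic form
    have hA : ∀ u ∈ A, 0 ≤ ∑ k, d k * ((u : EuclideanSpace ℝ (Fin N)) k)^2 := by
      intro u hu
      have h2 : ∑ k, s k * ((u : EuclideanSpace ℝ (Fin N)) k) ^ 2 ≤ c := hu.out
      have hsq := sphere_sum_sq N u
      have hexp : ∑ k, d k * ((u : EuclideanSpace ℝ (Fin N)) k)^2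
          = lam * (c * (∑ k, ((u : EuclideanSpace ℝ (Fin N)) k)^2)
              - ∑ k, s k * ((u : EuclideanSpace ℝ (Fin N)) k)^2) := by
        simp only [hd_def, Finset.mul_sum, ← Finset.sum_sub_distrib]
        apply Finset.sum_congr rfl
        intro k _
        ring
      rw [hexp, hsq, mul_one]
      have : 0 ≤ c - ∑ k, s k * ((u : EuclideanSpace ℝ (Fin N)) k)^2 := by linarith
      nlinarith
    -- measurability
    have hAm : MeasurableSet A := by
      have hcoord : ∀ k : Fin N,
          Measurable fun u : Metric.sphere (0 : EuclideanSpace ℝ (Fin N)) 1 =>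
            (u : EuclideanSpace ℝ (Fin N)) k := fun k =>
        ((measurable_pi_apply k).comp
          (MeasurableEquiv.toLp 2 (Fin N → ℝ)).symm.measurable).comp measurable_subtype_coe
      exact measurableSet_le
        (Finset.measurable_sum _ fun k _ => ((hcoord k).pow_const 2).const_mul _)
        measurable_const
    refine le_trans (chernoff_sphere N hN d hd A hAm hA) (ENNReal.ofReal_le_ofReal ?_)
    -- the scalar estimate
    set y : Fin N → ℝ := fun k => 2 * lam * (s k - c) with hy_def
    have hde : ∀ k, 1 - 2 * d k = 1 + y k := by
      intro k; rw [hd_def, hy_def]; ring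
    have hepos : ∀ k, 0 < 1 - 2 * d k := fun k => by linarith [hd k]
    -- lower bound on sum of logs
    have hQ : ∑ k, (s k - c)^2 ≤ N * v := by
      have step1 : ∀ k : Fin N, (s k - c)^2 ≤ (B - 2*c) * s k + c^2 := by
        intro k
        nlinarith [hs k, hsB k]
      calc ∑ k, (s k - c)^2 ≤ ∑ k, ((B - 2*c) * s k + c^2) := Finset.sum_le_sum fun k _ => step1 k
        _ = (B - 2*c) * (N * m) + N * c^2 := by
            rw [Finset.sum_add_distrib, ← Finset.mul_sum, hS1, Finset.sum_const,
              Finset.card_univ, Fintype.card_fin, nsmul_eq_mul]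
        _ = N * v := by rw [hv, hc]; ring
    have hlog : ∀ k, y k - (y k)^2/(2*D) ≤ Real.log (1 - 2 * d k) := by
      intro k
      rw [hde k]
      apply log_quad hDpos hD1
      simp only [hD, hy_def]
      have := hs k
      nlinarith
    have hid : 2 * lam * ((N:ℝ)*m - (N:ℝ)*c) - 4*lam^2*((N:ℝ)*v)/(2*D) = (N:ℝ)*(t^2/(2*(m*w))) := by
      rw [hDval, hlam, hc]
      field_simp
      ring
    have hsy : ∑ k, y k = 2*lam*((N:ℝ)*m - (N:ℝ)*c) := by
      rw [hy_def, ← Finset.mul_sum, Finset.sum_sub_distrib, hS1, Finset.sum_const,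
        Finset.card_univ, Fintype.card_fin, nsmul_eq_mul]
    have hsy2 : ∑ k, (y k)^2 = 4*lam^2 * ∑ k, (s k - c)^2 := by
      have hpt : ∀ k : Fin N, (y k)^2 = 4*lam^2*((s k - c)^2) := fun k => by
        rw [hy_def]; ring
      rw [Finset.sum_congr rfl fun k _ => hpt k, ← Finset.mul_sum]
    have hsumlog : (N:ℝ) * (t^2/(2*(m*w))) ≤ ∑ k, Real.log (1 - 2 * d k) := by
      have h1 : ∑ k, (y k - (y k)^2/(2*D)) ≤ ∑ k, Real.log (1 - 2 * d k) :=
        Finset.sum_le_sum fun k _ => hlog k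
      have h2 : ∑ k, (y k - (y k)^2/(2*D)) = ∑ k, y k - (∑ k, (y k)^2)/(2*D) := by
        rw [Finset.sum_sub_distrib, Finset.sum_div]
      have h3 : (N:ℝ) * (t^2/(2*(m*w))) ≤ ∑ k, y k - (∑ k, (y k)^2)/(2*D) := by
        rw [hsy, hsy2, ← hid]
        have hdiv : 4*lam^2 * (∑ k, (s k - c)^2) / (2*D) ≤ 4*lam^2*((N:ℝ)*v)/(2*D) := by
          gcongr
        linarith
      linarith
    -- convert product of square roots to an exponential
    have hprod : ∏ k, Real.sqrt (1/(1 - 2 * d k))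
        = Real.exp (∑ k, -(Real.log (1 - 2 * d k))/2) := by
      rw [Real.exp_sum]
      apply Finset.prod_congr rfl
      intro k _
      have he := hepos k
      rw [← Real.exp_log (show (0:ℝ) < Real.sqrt (1/(1 - 2*d k)) from
          Real.sqrt_pos.mpr (by positivity)),
        Real.log_sqrt (by positivity), one_div, Real.log_inv]
    rw [hprod]
    apply Real.exp_le_exp.mpr
    have hsum2 : ∑ k, -(Real.log (1 - 2 * d k))/2 = -(∑ k, Real.log (1 - 2 * d k))/2 := by
      rw [← Finset.sum_div, ← Finset.sum_neg_distrib]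
    rw [hsum2]
    have hmwB : m * w ≤ B * (B + t) := by nlinarith
    have hfinal : (N:ℝ) * t^2 / (4*B*(B+t)) ≤ ((N:ℝ) * (t^2/(2*(m*w))))/2 := by
      have heq : ((N:ℝ) * (t^2/(2*(m*w))))/2 = (N:ℝ)*t^2/(4*(m*w)) := by
        rw [_root_.eq_div_iff (show ((4:ℝ)*(m*w)) ≠ 0 from (by positivity : (0:ℝ) < 4*(m*w)).ne')]
        field_simp
        ring
      rw [heq]
      gcongr (N:ℝ)*t^2/?_
      linarith
    have step1 : (-∑ k, Real.log (1 - 2 * d k))/2 ≤ -((N:ℝ) * (t^2/(2*(m*w))))/2 := by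
      linarith
    have step2 : -((N:ℝ) * (t^2/(2*(m*w))))/2 ≤ -((N:ℝ) * t ^ 2) / (4 * B * (B + t)) := by
      rw [neg_div, neg_div, neg_le_neg_iff]
      linarith
    linarith
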